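/- Minimal odometer well-definedness: given instruction stacks, a configuration σ, and parameters u_0, f_0, the inductive procedure m(0) = u_0 and m(v) = min{ k ∈ ℤ : m^L restricted to k at site v equals m^R(v−1) − f_0 − Σ_{i=1}^{v−1}|σ(i)| } defines an extended odometer m that is pointwise minimal among all extended stable odometers in the class with value u_0 at site 0 and net flow f_0 from 0 to 1: every u in this class satisfies u(v) ≥ m(v) and u^R(v) ≥ m^R(v) for all v. -/

import Mathlib

/-- An activated random walk instruction. -/
inductive ArwInstr
  | left
  | right
  | sleep
deriving DecidableEq

/-- Signed number of `right` instructions among the first `m` instructions at site `v`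
of a two-sided instruction stack (negative indices are executed with reversed effect). -/
noncomputable def ecntR (I : ℤ → ℤ → ArwInstr) (v : ℤ) (m : ℤ) : ℤ :=
  if 0 ≤ m then (((Finset.Ioc 0 m).filter (fun k => I v k = ArwInstr.right)).card : ℤ)
  else -((((Finset.Ioc m 0).filter (fun k => I v k = ArwInstr.right)).card : ℤ))

/-- Signed number of `left` instructions among the first `m` instructions at site `v`. -/
noncomputable def ecntL (I : ℤ → ℤ → ArwInstr) (v : ℤ) (m : ℤ) : ℤ :=
  if 0 ≤ m then (((Finset.Ioc 0 m).filter (fun k => I v k = ArwInstr.left)).card : ℤ)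
  else -((((Finset.Ioc m 0).filter (fun k => I v k = ArwInstr.left)).card : ℤ))

/-- `u^R(v)` for an extended odometer `u : ℤ → ℤ`. -/
noncomputable def eR (I : ℤ → ℤ → ArwInstr) (u : ℤ → ℤ) (v : ℤ) : ℤ := ecntR I v (u v)

/-- `u^L(v)` for an extended odometer `u : ℤ → ℤ`. -/
noncomputable def eL (I : ℤ → ℤ → ArwInstr) (u : ℤ → ℤ) (v : ℤ) : ℤ := ecntL I v (u v)

/-- The local balance `h(v) = σ(v) + u^R(v-1) + u^L(v+1) - u^L(v) - u^R(v)`. -/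
noncomputable def ebal (I : ℤ → ℤ → ArwInstr) (σ : ℤ → ℕ) (u : ℤ → ℤ) (v : ℤ) : ℤ :=
  (σ v : ℤ) + eR I u (v - 1) + eL I u (v + 1) - eL I u v - eR I u v

/-- An extended odometer `u` is stable at `v` if `h(v) ∈ {0,1}` and `h(v) = 1` iff the
last executed instruction at `v` is `sleep`. -/
def EStableAt (I : ℤ → ℤ → ArwInstr) (σ : ℤ → ℕ) (u : ℤ → ℤ) (v : ℤ) : Prop :=
  ebal I σ u v ∈ ({0, 1} : Set ℤ) ∧ (ebal I σ u v = 1 ↔ I v (u v) = ArwInstr.sleep)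

/-! Auxiliary counting lemmas -/

noncomputable def cnt (J : ℤ → ArwInstr) (a : ArwInstr) (m : ℤ) : ℤ :=
  if 0 ≤ m then (((Finset.Ioc 0 m).filter (fun k => J k = a)).card : ℤ)
  else -((((Finset.Ioc m 0).filter (fun k => J k = a)).card : ℤ))

lemma ecntR_eq (I : ℤ → ℤ → ArwInstr) (v m : ℤ) :
    ecntR I v m = cnt (I v) ArwInstr.right m := rfl

lemma ecntL_eq (I : ℤ → ℤ → ArwInstr) (v m : ℤ) :
    ecntL I v m = cnt (I v) ArwInstr.left m := rfl

lemma Ioc_succ_ins (x y : ℤ) (h : x ≤ y) :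
    Finset.Ioc x (y+1) = insert (y+1) (Finset.Ioc x y) := by
  ext z; simp only [Finset.mem_Ioc, Finset.mem_insert]; omega

lemma cnt_zero (J : ℤ → ArwInstr) (a : ArwInstr) : cnt J a 0 = 0 := by
  simp [cnt]

lemma cnt_succ (J : ℤ → ArwInstr) (a : ArwInstr) (m : ℤ) :
    cnt J a (m+1) = cnt J a m + (if J (m+1) = a then 1 else 0) := by
  rcases le_or_gt 0 m with hm | hm
  · rw [cnt, cnt, if_pos hm, if_pos (by omega : (0:ℤ) ≤ m + 1), Ioc_succ_ins 0 m hm,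
      Finset.filter_insert]
    split
    · rw [Finset.card_insert_of_notMem (by simp [Finset.mem_Ioc])]
      push_cast; ring
    · ring
  · rcases eq_or_lt_of_le (by omega : m + 1 ≤ 0) with h0 | h0
    · rw [cnt, cnt, if_pos (le_of_eq h0.symm), if_neg (by omega)]
      have h1 : Finset.Ioc (0:ℤ) (m+1) = ∅ := Finset.Ioc_eq_empty (by omega)
      have h2 : Finset.Ioc m 0 = {m+1} := by
        ext z; simp only [Finset.mem_Ioc, Finset.mem_singleton]; omega
      rw [h1, h2, Finset.filter_singleton]
      split <;> simp
    · rw [cnt, cnt, if_neg (by omega), if_neg (by omega)]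
      have h2 : Finset.Ioc m 0 = insert (m+1) (Finset.Ioc (m+1) 0) := by
        ext z; simp only [Finset.mem_Ioc, Finset.mem_insert]; omega
      rw [h2, Finset.filter_insert]
      split
      · rw [Finset.card_insert_of_notMem (by simp [Finset.mem_Ioc])]
        push_cast; ring
      · ring

lemma cnt_mono (J : ℤ → ArwInstr) (a : ArwInstr) {k k' : ℤ} (h : k ≤ k') :
    cnt J a k ≤ cnt J a k' := by
  refine Int.le_induction (motive := fun x _ => cnt J a k ≤ cnt J a x) ?_ ?_ k' h
  · exact le_refl _
  · intro p hp ih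
    calc cnt J a k ≤ cnt J a p := ih
      _ ≤ cnt J a (p + 1) := by rw [cnt_succ]; split <;> omega

lemma cnt_large (J : ℤ → ArwInstr) (a : ArwInstr)
    (hL : ∀ N : ℤ, ∃ k, N < k ∧ J k = a) (t : ℤ) : ∃ k, t ≤ cnt J a k := by
  have H : ∀ j : ℕ, ∃ k, (j : ℤ) ≤ cnt J a k := by
    intro j
    induction j with
    | zero => exact ⟨0, by simp [cnt_zero]⟩
    | succ j ih =>
        obtain ⟨k, hk⟩ := ih
        obtain ⟨k', hk1, hk2⟩ := hL k
        refine ⟨k', ?_⟩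
        have h3 : cnt J a k' = cnt J a (k' - 1) + 1 := by
          have := cnt_succ J a (k' - 1)
          rw [sub_add_cancel, if_pos hk2] at this
          omega
        have h4 : cnt J a k ≤ cnt J a (k' - 1) := cnt_mono J a (by omega)
        push_cast; omega
  obtain ⟨k, hk⟩ := H t.toNat
  exact ⟨k, le_trans (Int.self_le_toNat t) hk⟩

lemma cnt_small (J : ℤ → ArwInstr) (a : ArwInstr)
    (hL : ∀ N : ℤ, ∃ k, k < N ∧ J k = a) (t : ℤ) : ∃ k, cnt J a k ≤ t := by
  have H : ∀ j : ℕ, ∃ k, cnt J a k ≤ -(j : ℤ) := by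
    intro j
    induction j with
    | zero => exact ⟨0, by simp [cnt_zero]⟩
    | succ j ih =>
        obtain ⟨k, hk⟩ := ih
        obtain ⟨k', hk1, hk2⟩ := hL k
        refine ⟨k' - 1, ?_⟩
        have h3 : cnt J a k' = cnt J a (k' - 1) + 1 := by
          have := cnt_succ J a (k' - 1)
          rw [sub_add_cancel, if_pos hk2] at this
          omega
        have h4 : cnt J a k' ≤ cnt J a k := cnt_mono J a (by omega)
        push_cast; omega
  obtain ⟨k, hk⟩ := H (-t).toNat
  refine ⟨k, le_trans hk ?_⟩
  have := Int.self_le_toNat (-t)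
  omega

lemma cnt_exists_min (J : ℤ → ArwInstr) (a : ArwInstr)
    (hL : ∀ N : ℤ, ∃ k, N < k ∧ J k = a)
    (hL' : ∀ N : ℤ, ∃ k, k < N ∧ J k = a) (t : ℤ) :
    ∃ lb : ℤ, cnt J a lb = t ∧ ∀ k, t ≤ cnt J a k → lb ≤ k := by
  classical
  obtain ⟨kb, hkb⟩ := cnt_small J a hL' (t - 1)
  have Hbdd : ∃ b : ℤ, ∀ z : ℤ, t ≤ cnt J a z → b ≤ z := by
    refine ⟨kb + 1, fun z hz => ?_⟩
    by_contra h
    have : cnt J a z ≤ cnt J a kb := cnt_mono J a (by omega)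
    omega
  obtain ⟨lb, hlb1, hlb2⟩ := Int.exists_least_of_bdd Hbdd (cnt_large J a hL t)
  have h5 : cnt J a (lb - 1) < t := by
    by_contra h
    have := hlb2 (lb - 1) (by omega)
    omega
  have h6 : cnt J a lb ≤ cnt J a (lb - 1) + 1 := by
    have := cnt_succ J a (lb - 1)
    rw [sub_add_cancel] at this
    split at this <;> omega
  exact ⟨lb, by omega, hlb2⟩

/-! The minimal odometer construction -/

noncomputable def minOdo (I : ℤ → ℤ → ArwInstr) (σ : ℤ → ℕ) (u₀ f₀ : ℤ)
    (hrich : ∀ v : ℤ, ∀ N : ℤ,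
      (∃ k : ℤ, N < k ∧ I v k = ArwInstr.left) ∧
      (∃ k : ℤ, k < N ∧ I v k = ArwInstr.left)) : ℕ → ℤ
  | 0 => u₀
  | j+1 =>
    (cnt_exists_min (I ((j:ℤ)+1)) ArwInstr.left
      (fun N => (hrich ((j:ℤ)+1) N).1) (fun N => (hrich ((j:ℤ)+1) N).2)
      (cnt (I (j:ℤ)) ArwInstr.right (minOdo I σ u₀ f₀ hrich j) - f₀ -
        ∑ i ∈ Finset.Ico (1:ℤ) ((j:ℤ)+1), (σ i : ℤ))).choose

lemma minOdo_spec (I : ℤ → ℤ → ArwInstr) (σ : ℤ → ℕ) (u₀ f₀ : ℤ)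
    (hrich : ∀ v : ℤ, ∀ N : ℤ,
      (∃ k : ℤ, N < k ∧ I v k = ArwInstr.left) ∧
      (∃ k : ℤ, k < N ∧ I v k = ArwInstr.left)) (j : ℕ) :
    cnt (I ((j:ℤ)+1)) ArwInstr.left (minOdo I σ u₀ f₀ hrich (j+1)) =
      cnt (I (j:ℤ)) ArwInstr.right (minOdo I σ u₀ f₀ hrich j) - f₀ -
        ∑ i ∈ Finset.Ico (1:ℤ) ((j:ℤ)+1), (σ i : ℤ) ∧
    ∀ k : ℤ, cnt (I (j:ℤ)) ArwInstr.right (minOdo I σ u₀ f₀ hrich j) - f₀ -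
        ∑ i ∈ Finset.Ico (1:ℤ) ((j:ℤ)+1), (σ i : ℤ) ≤ cnt (I ((j:ℤ)+1)) ArwInstr.left k →
      minOdo I σ u₀ f₀ hrich (j+1) ≤ k := by
  have h := (cnt_exists_min (I ((j:ℤ)+1)) ArwInstr.left
      (fun N => (hrich ((j:ℤ)+1) N).1) (fun N => (hrich ((j:ℤ)+1) N).2)
      (cnt (I (j:ℤ)) ArwInstr.right (minOdo I σ u₀ f₀ hrich j) - f₀ -
        ∑ i ∈ Finset.Ico (1:ℤ) ((j:ℤ)+1), (σ i : ℤ))).choose_spec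
  exact h

/-- minimal odometer well-definedness: given two-sided instruction stacks
(with infinitely many `left` instructions in each direction at every site), a
configuration `σ`, and parameters `u₀, f₀`, the inductive procedure `m(0) = u₀`,
`m(v) = min { k : m^L(v) evaluated at k equals m^R(v-1) - f₀ - Σ_{i=1}^{v-1} |σ(i)| }`
defines an extended odometer `m` that is pointwise minimal among all extended stable
odometers on `{0,…,n}` with value `u₀` at `0` and net flow `f₀` from `0` to `1`:
every such `u` satisfies `u(v) ≥ m(v)` and `u^R(v) ≥ m^R(v)` for all `v`. -/
theorem minimal_odometer (I : ℤ → ℤ → ArwInstr) (σ : ℤ → ℕ) (n : ℕ) (u₀ f₀ : ℤ)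
    (hrich : ∀ v : ℤ, ∀ N : ℤ,
      (∃ k : ℤ, N < k ∧ I v k = ArwInstr.left) ∧
      (∃ k : ℤ, k < N ∧ I v k = ArwInstr.left)) :
    ∃ m : ℤ → ℤ,
      m 0 = u₀ ∧
      (∀ v ∈ Finset.Icc (1 : ℤ) (n : ℤ),
        ecntL I v (m v) =
          ecntR I (v - 1) (m (v - 1)) - f₀ - ∑ i ∈ Finset.Ico (1 : ℤ) v, (σ i : ℤ) ∧
        ∀ k : ℤ, ecntL I v k =
            ecntR I (v - 1) (m (v - 1)) - f₀ - ∑ i ∈ Finset.Ico (1 : ℤ) v, (σ i : ℤ) →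
          m v ≤ k) ∧
      (∀ u : ℤ → ℤ, u 0 = u₀ → eR I u 0 - eL I u 1 = f₀ →
        (∀ v ∈ Set.Icc (1 : ℤ) (n : ℤ), EStableAt I σ u v) →
        ∀ v ∈ Set.Icc (0 : ℤ) (n : ℤ), m v ≤ u v ∧ ecntR I v (m v) ≤ ecntR I v (u v)) := by
  set M : ℕ → ℤ := minOdo I σ u₀ f₀ hrich with hMdef
  set m : ℤ → ℤ := fun v => if 0 ≤ v then M v.toNat else u₀ with hmdef
  have hmval : ∀ w : ℤ, 0 ≤ w → m w = M w.toNat := by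
    intro w hw; rw [hmdef]; simp [hw]
  have hM0 : M 0 = u₀ := by rw [hMdef]; rfl
  refine ⟨m, ?_, ?_, ?_⟩
  · rw [hmval 0 le_rfl]; simpa using hM0
  · intro v hv
    rw [Finset.mem_Icc] at hv
    obtain ⟨hv1, hv2⟩ := hv
    set j : ℕ := (v-1).toNat with hj
    have hvj : v = (j:ℤ) + 1 := by rw [hj]; omega
    have h0 : (0:ℤ) ≤ v := by omega
    have h1 : (0:ℤ) ≤ v - 1 := by omega
    have hvt : v.toNat = j + 1 := by omega
    have hvt1 : (v-1).toNat = j := rfl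
    have e1 : v - 1 = (j:ℤ) := by omega
    obtain ⟨hs1, hs2⟩ := minOdo_spec I σ u₀ f₀ hrich j
    rw [hmval v h0, hmval (v-1) h1, hvt, hvt1, e1, ecntL_eq, ecntR_eq]
    rw [hvj]
    exact ⟨hs1, fun k hk => hs2 k (le_of_eq hk.symm)⟩
  · intro u hu0 hflow hstab v hv
    obtain ⟨hv0, hvn⟩ := hv
    -- flow bound for any stable u in the class
    have Q : ∀ j : ℕ, 1 ≤ j → (j:ℤ) ≤ (n:ℤ) →
        ecntR I ((j:ℤ)-1) (u ((j:ℤ)-1)) - f₀ - ∑ i ∈ Finset.Ico (1:ℤ) (j:ℤ), (σ i : ℤ)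
          ≤ ecntL I (j:ℤ) (u (j:ℤ)) := by
      intro j hj
      induction j, hj using Nat.le_induction with
      | base =>
          intro _
          have hf := hflow
          simp only [eR, eL] at hf
          norm_num
          omega
      | succ j hj ih =>
          intro hjn1
          have hjn : (j:ℤ) ≤ (n:ℤ) := by push_cast at hjn1 ⊢; omega
          have ihb := ih hjn
          have hst := hstab (j:ℤ) ⟨by exact_mod_cast hj, hjn⟩
          have hbal : ebal I σ u (j:ℤ) = 0 ∨ ebal I σ u (j:ℤ) = 1 := by
            simpa [Set.mem_insert_iff] using hst.1
          have hbal' : (0:ℤ) ≤ (σ (j:ℤ) : ℤ) + ecntR I ((j:ℤ)-1) (u ((j:ℤ)-1))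
              + ecntL I ((j:ℤ)+1) (u ((j:ℤ)+1)) - ecntL I (j:ℤ) (u (j:ℤ))
              - ecntR I (j:ℤ) (u (j:ℤ)) := by
            simp only [ebal, eR, eL] at hbal
            omega
          have hsum : ∑ i ∈ Finset.Ico (1:ℤ) ((j:ℤ)+1), (σ i : ℤ) =
              ∑ i ∈ Finset.Ico (1:ℤ) (j:ℤ), (σ i : ℤ) + (σ (j:ℤ) : ℤ) := by
            rw [show Finset.Ico (1:ℤ) ((j:ℤ)+1) = insert (j:ℤ) (Finset.Ico (1:ℤ) (j:ℤ)) by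
                ext z; simp only [Finset.mem_Ico, Finset.mem_insert]; omega,
              Finset.sum_insert (by simp [Finset.mem_Ico])]
            ring
          push_cast
          rw [show (j:ℤ)+1-1 = (j:ℤ) by ring]
          linarith
    -- main induction
    have key : ∀ j : ℕ, (j:ℤ) ≤ (n:ℤ) →
        M j ≤ u (j:ℤ) ∧ cnt (I (j:ℤ)) ArwInstr.right (M j) ≤ cnt (I (j:ℤ)) ArwInstr.right (u (j:ℤ)) := by
      intro j
      induction j with
      | zero =>
          intro _
          constructor
          · rw [hM0]; push_cast; rw [hu0]
          · push_cast; rw [hM0, hu0]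
      | succ j ih =>
          intro hjn1
          have hjn : (j:ℤ) ≤ (n:ℤ) := by push_cast at hjn1; omega
          obtain ⟨ih1, ih2⟩ := ih hjn
          obtain ⟨hs1, hs2⟩ := minOdo_spec I σ u₀ f₀ hrich j
          have hQ := Q (j+1) (by omega) hjn1
          push_cast at hQ
          rw [show (j:ℤ)+1-1 = (j:ℤ) by ring] at hQ
          rw [ecntR_eq, ecntL_eq] at hQ
          have hle : M (j+1) ≤ u ((j:ℤ)+1) := by
            apply hs2
            calc cnt (I (j:ℤ)) ArwInstr.right (M j) - f₀ -
                  ∑ i ∈ Finset.Ico (1:ℤ) ((j:ℤ)+1), (σ i : ℤ)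
                ≤ cnt (I (j:ℤ)) ArwInstr.right (u (j:ℤ)) - f₀ -
                  ∑ i ∈ Finset.Ico (1:ℤ) ((j:ℤ)+1), (σ i : ℤ) := by linarith
              _ ≤ cnt (I ((j:ℤ)+1)) ArwInstr.left (u ((j:ℤ)+1)) := hQ
          constructor
          · push_cast; exact hle
          · push_cast; exact cnt_mono _ _ hle
    have hvt : ((v.toNat : ℕ) : ℤ) = v := Int.toNat_of_nonneg hv0
    obtain ⟨k1, k2⟩ := key v.toNat (by rw [hvt]; exact hvn)
    rw [hvt] at k1 k2
    rw [hmval v hv0, ecntR_eq, ecntR_eq]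
    exact ⟨k1, k2⟩
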